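/- arXiv:2204.01473 — 2 statements merged into one kernel-verified Lean document; each statement's English description precedes it below -/
import Mathlib

section
/- Let m be a positive half-integer, s a half-integer, and p a nonnegative integer such that mp ∈ ℤ. Then for all τ in the upper half-plane and z1, z2 ∈ ℂ (with all denominators nonzero): Φ^{[m,s]}(τ, z1, z2+pτ, 0) = e^{−2πimpz1} Φ^{[m,s]}(τ, z1, z2, 0) − e^{−2πimpz1} Σ_{k=0}^{mp−1} e^{πi(s+k)(z1−z2)} q^{−(s+k)²/(4m)} [θ_{s+k,m} − θ_{−(s+k),m}](τ, z1+z2). -/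
open Complex

noncomputable section

namespace Wakimoto

/-- `qpow τ x = e^{2πiτx}`, i.e. `q^x` where `q = e^{2πiτ}`. -/
def qpow (τ x : ℂ) : ℂ := Complex.exp (2 * Real.pi * Complex.I * τ * x)

/-- `e2 z = e^{2πiz}`. -/
def e2 (z : ℂ) : ℂ := Complex.exp (2 * Real.pi * Complex.I * z)

/-- The mock theta function `Φ^{[m,s]}_1`. -/
def Phi1 (m s : ℂ) (τ z1 z2 t : ℂ) : ℂ :=
  Complex.exp (-(2 * Real.pi * Complex.I) * m * t) *
    ∑' j : ℤ,
      Complex.exp (2 * Real.pi * Complex.I * (m * (j : ℂ) * (z1 + z2) + s * z1)) *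
          qpow τ (m * (j : ℂ) ^ 2 + s * (j : ℂ)) /
        (1 - e2 z1 * qpow τ (j : ℂ))

/-- The mock theta function `Φ^{[m,s]}_2`. -/
def Phi2 (m s : ℂ) (τ z1 z2 t : ℂ) : ℂ :=
  Complex.exp (-(2 * Real.pi * Complex.I) * m * t) *
    ∑' j : ℤ,
      Complex.exp (-(2 * Real.pi * Complex.I) * (m * (j : ℂ) * (z1 + z2) + s * z2)) *
          qpow τ (m * (j : ℂ) ^ 2 + s * (j : ℂ)) /
        (1 - e2 (-z2) * qpow τ (j : ℂ))

/-- `Φ^{[m,s]} = Φ^{[m,s]}_1 - Φ^{[m,s]}_2`. -/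
def Phi (m s : ℂ) (τ z1 z2 t : ℂ) : ℂ :=
  Phi1 m s τ z1 z2 t - Phi2 m s τ z1 z2 t

/-- Jacobi's theta function `θ_{k,m}`. -/
def jTheta (k m : ℂ) (τ z : ℂ) : ℂ :=
  ∑' j : ℤ,
    Complex.exp (2 * Real.pi * Complex.I * (m * ((j : ℂ) + k / (2 * m)) * z)) *
      qpow τ (m * ((j : ℂ) + k / (2 * m)) ^ 2)

/-- The signed theta function `θ^{(-)}_{k,m}`. -/
def jThetaM (k m : ℂ) (τ z : ℂ) : ℂ :=
  ∑' j : ℤ,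
    (-1 : ℂ) ^ j *
      Complex.exp (2 * Real.pi * Complex.I * (m * ((j : ℂ) + k / (2 * m)) * z)) *
      qpow τ (m * ((j : ℂ) + k / (2 * m)) ^ 2)

/-- The Dedekind eta function. -/
def eta (τ : ℂ) : ℂ := qpow τ (1 / 24) * ∏' n : ℕ, (1 - qpow τ ((n : ℂ) + 1))

/-- The Mumford theta functions `ϑ_{ab}`. -/
def mumford (a b : ℕ) (τ z : ℂ) : ℂ :=
  ∑' n : ℤ,
    Complex.exp (Real.pi * Complex.I * τ * ((n : ℂ) + (a : ℂ) / 2) ^ 2 +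
      2 * Real.pi * Complex.I * ((n : ℂ) + (a : ℂ) / 2) * (z + (b : ℂ) / 2))

/-- `z` lies in the lattice `ℤ + ℤτ`. -/
def InLattice (τ z : ℂ) : Prop := ∃ a b : ℤ, z = (a : ℂ) + (b : ℂ) * τ


open Filter

lemma norm_cexp (w : ℂ) : ‖Complex.exp w‖ = Real.exp w.re := Complex.norm_exp w

lemma re_quad (α β γ : ℂ) (x : ℝ) : (α * (x:ℂ)^2 + β * (x:ℂ) + γ).re = α.re * x^2 + β.re * x + γ.re := by
  simp [Complex.add_re, Complex.mul_re, Complex.ofReal_re, Complex.ofReal_im, pow_two]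

lemma summable_exp_quad_nat (α β γ : ℂ) (hα : α.re < 0) :
    Summable fun n : ℕ => Complex.exp (α * (n:ℂ)^2 + β * (n:ℂ) + γ) := by
  apply summable_of_ratio_norm_eventually_le (r := Real.exp (-1))
  · rw [Real.exp_lt_one_iff]; norm_num
  · have ht : Tendsto (fun n : ℕ => α.re * (2*(n:ℝ)+1) + β.re) atTop atBot := by
      have h2 : Tendsto (fun n : ℕ => (2*(n:ℝ)+1)) atTop atTop := by
        apply tendsto_atTop_add_const_right
        exact Tendsto.const_mul_atTop (by norm_num) tendsto_natCast_atTop_atTop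
      exact tendsto_atBot_add_const_right _ β.re (h2.const_mul_atTop_of_neg hα)
    filter_upwards [ht.eventually_le_atBot (-1)] with n hn
    have e1 : ((n+1 : ℕ) : ℂ) = (((n:ℝ)+1 : ℝ):ℂ) := by push_cast; ring
    have e2 : ((n : ℕ) : ℂ) = ((n:ℝ):ℂ) := by norm_cast
    rw [norm_cexp, norm_cexp, e1, e2, re_quad, re_quad, ← Real.exp_add, Real.exp_le_exp]
    nlinarith [hn]

lemma summable_exp_quad (α β γ : ℂ) (hα : α.re < 0) :
    Summable fun j : ℤ => Complex.exp (α * (j:ℂ)^2 + β * (j:ℂ) + γ) := by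
  apply Summable.of_nat_of_neg_add_one
  · exact (summable_exp_quad_nat α β γ hα).congr (by intro n; push_cast; ring_nf)
  · apply (summable_exp_quad_nat α (-β + 2*α) (α - β + γ) hα).congr
    intro n; congr 1; push_cast; ring

lemma re_two_pi_I_tau_mul (τ : ℂ) (m : ℝ) : (2 * (Real.pi:ℂ) * Complex.I * τ * (m:ℂ)).re
    = -(2 * Real.pi * τ.im * m) := by
  simp [Complex.mul_re, Complex.mul_im]

/-- Master summability lemma for theta-like series. -/
lemma summable_series (m : ℝ) (hm : 0 < m) (τ : ℂ) (hτ : 0 < τ.im) (s β γ : ℂ) :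
    Summable fun j : ℤ => Complex.exp (β * (j:ℂ) + γ) * qpow τ ((m:ℂ)*(j:ℂ)^2 + s*(j:ℂ)) := by
  have hα : (2 * (Real.pi:ℂ) * Complex.I * τ * (m:ℂ)).re < 0 := by
    rw [re_two_pi_I_tau_mul]
    nlinarith [mul_pos (mul_pos Real.pi_pos hτ) hm]
  apply (summable_exp_quad _ (β + 2 * (Real.pi:ℂ) * Complex.I * τ * s) γ hα).congr
  intro j
  rw [qpow, ← Complex.exp_add]
  congr 1
  ring

lemma e2_mul_qpow (τ z : ℂ) (j : ℤ) :
    e2 z * qpow τ (j:ℂ) = Complex.exp (2 * (Real.pi:ℂ) * Complex.I * (z + (j:ℂ) * τ)) := by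
  rw [e2, qpow, ← Complex.exp_add]; congr 1; ring

lemma norm_e2_qpow (τ z : ℂ) (j : ℤ) :
    ‖e2 z * qpow τ (j:ℂ)‖ = Real.exp (-(2 * Real.pi * (z.im + (j:ℝ) * τ.im))) := by
  rw [e2_mul_qpow, norm_cexp]
  congr 1
  simp [Complex.mul_re, Complex.mul_im, Complex.add_im, Complex.add_re]

lemma denom_ne_zero (τ z : ℂ) (hz : ¬ InLattice τ z) (j : ℤ) :
    1 - e2 z * qpow τ (j:ℂ) ≠ 0 := by
  intro h
  apply hz
  have h1 : e2 z * qpow τ (j:ℂ) = 1 := by linear_combination -h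
  rw [e2_mul_qpow, Complex.exp_eq_one_iff] at h1
  obtain ⟨n, hn⟩ := h1
  refine ⟨n, -j, ?_⟩
  have h2pi : (2 * (Real.pi:ℂ) * Complex.I) ≠ 0 := by
    exact mul_ne_zero (mul_ne_zero two_ne_zero (Complex.ofReal_ne_zero.mpr Real.pi_ne_zero)) Complex.I_ne_zero
  have : z + (j:ℂ) * τ = (n:ℂ) :=
    mul_left_cancel₀ h2pi (by linear_combination hn)
  push_cast
  linear_combination this

/-- Finitely many `j` give a "middle-sized" value of `‖e2 z * qpow τ j‖`. -/
lemma finite_mid (τ z : ℂ) (hτ : 0 < τ.im) :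
    {j : ℤ | 1/2 < ‖e2 z * qpow τ (j:ℂ)‖ ∧ ‖e2 z * qpow τ (j:ℂ)‖ < 2}.Finite := by
  have hbpos : 0 < 2 * Real.pi * τ.im := by positivity
  apply Set.Finite.subset (Set.finite_Icc
    (⌈(-(2 * Real.pi * z.im) - Real.log 2) / (2 * Real.pi * τ.im)⌉)
    (⌊(-(2 * Real.pi * z.im) + Real.log 2) / (2 * Real.pi * τ.im)⌋))
  rintro j ⟨h1, h2⟩
  rw [norm_e2_qpow] at h1 h2
  have l1 : Real.log (1/2) < -(2 * Real.pi * (z.im + (j:ℝ) * τ.im)) := by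
    rw [← Real.log_exp (-(2 * Real.pi * (z.im + (j:ℝ) * τ.im)))]
    exact Real.log_lt_log (by norm_num) h1
  have l2 : -(2 * Real.pi * (z.im + (j:ℝ) * τ.im)) < Real.log 2 := by
    rw [← Real.log_exp (-(2 * Real.pi * (z.im + (j:ℝ) * τ.im)))]
    exact Real.log_lt_log (Real.exp_pos _) h2
  rw [Real.log_div (by norm_num) (by norm_num), Real.log_one] at l1
  constructor
  · rw [Int.ceil_le, div_le_iff₀ hbpos]
    nlinarith
  · rw [Int.le_floor, le_div_iff₀ hbpos]
    nlinarith

lemma summable_div_denom (τ : ℂ) (hτ : 0 < τ.im) (z : ℂ) (f : ℤ → ℂ) (hf : Summable f) :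
    Summable fun j : ℤ => f j / (1 - e2 z * qpow τ (j:ℂ)) := by
  apply Summable.of_norm_bounded_eventually (g := fun j => 2 * ‖f j‖)
    ((summable_norm_iff.mpr hf).mul_left 2)
  rw [Filter.eventually_cofinite]
  apply Set.Finite.subset (finite_mid τ z hτ)
  intro j hj
  simp only [Set.mem_setOf_eq] at hj ⊢
  by_contra hc
  apply hj
  rw [norm_div]
  have hD : (1:ℝ)/2 ≤ ‖1 - e2 z * qpow τ (j:ℂ)‖ := by
    rcases not_and_or.mp hc with h | h
    · push_neg at h
      have := norm_sub_norm_le (1 : ℂ) (e2 z * qpow τ (j:ℂ))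
      rw [norm_one] at this
      linarith
    · push_neg at h
      have := norm_sub_norm_le (e2 z * qpow τ (j:ℂ)) (1 : ℂ)
      rw [norm_one] at this
      rw [← neg_sub, norm_neg]
      linarith
  rw [div_le_iff₀ (lt_of_lt_of_le (by norm_num) hD)]
  nlinarith [norm_nonneg (f j)]

lemma Phi1_t0 (m s τ z1 z2 : ℂ) :
    Phi1 m s τ z1 z2 0 = ∑' j : ℤ,
      Complex.exp (2 * Real.pi * Complex.I * (m * (j : ℂ) * (z1 + z2) + s * z1)) *
          qpow τ (m * (j : ℂ) ^ 2 + s * (j : ℂ)) /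
        (1 - e2 z1 * qpow τ (j : ℂ)) := by
  rw [Phi1, mul_zero, Complex.exp_zero, one_mul]

lemma Phi2_t0 (m s τ z1 z2 : ℂ) :
    Phi2 m s τ z1 z2 0 = ∑' j : ℤ,
      Complex.exp (-(2 * Real.pi * Complex.I) * (m * (j : ℂ) * (z1 + z2) + s * z2)) *
          qpow τ (m * (j : ℂ) ^ 2 + s * (j : ℂ)) /
        (1 - e2 (-z2) * qpow τ (j : ℂ)) := by
  rw [Phi2, mul_zero, Complex.exp_zero, one_mul]

lemma summable_G1 (m : ℝ) (hm : 0 < m) (τ : ℂ) (hτ : 0 < τ.im) (s u v : ℂ) :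
    Summable fun j : ℤ =>
      Complex.exp (2 * Real.pi * Complex.I * ((m:ℂ) * (j:ℂ) * u + s * v)) *
        qpow τ ((m:ℂ) * (j:ℂ)^2 + s * (j:ℂ)) := by
  apply (summable_series m hm τ hτ s (2 * Real.pi * Complex.I * (m:ℂ) * u)
    (2 * Real.pi * Complex.I * (s * v))).congr
  intro j; congr 1; ring

lemma summable_G2 (m : ℝ) (hm : 0 < m) (τ : ℂ) (hτ : 0 < τ.im) (s u v : ℂ) :
    Summable fun j : ℤ =>
      Complex.exp (-(2 * Real.pi * Complex.I) * ((m:ℂ) * (j:ℂ) * u + s * v)) *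
        qpow τ ((m:ℂ) * (j:ℂ)^2 + s * (j:ℂ)) := by
  apply (summable_series m hm τ hτ s (-(2 * Real.pi * Complex.I * (m:ℂ) * u))
    (-(2 * Real.pi * Complex.I * (s * v)))).congr
  intro j; congr 1; ring

lemma neg_not_inLattice (τ z : ℂ) (hz : ¬ InLattice τ z) : ¬ InLattice τ (-z) := by
  rintro ⟨a, b, hab⟩
  exact hz ⟨-a, -b, by push_cast; linear_combination -hab⟩

lemma Phi1_step (m : ℝ) (hm : 0 < m) (τ : ℂ) (hτ : 0 < τ.im) (z1 z2 : ℂ)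
    (hz1 : ¬ InLattice τ z1) (s : ℂ) :
    Phi1 (m:ℂ) (s+1) τ z1 z2 0 = Phi1 (m:ℂ) s τ z1 z2 0 -
      ∑' j : ℤ, Complex.exp (2 * Real.pi * Complex.I * ((m:ℂ) * (j:ℂ) * (z1 + z2) + s * z1)) *
        qpow τ ((m:ℂ) * (j:ℂ)^2 + s * (j:ℂ)) := by
  have hG : Summable fun j : ℤ =>
      Complex.exp (2 * Real.pi * Complex.I * ((m:ℂ) * (j:ℂ) * (z1 + z2) + s * z1)) *
        qpow τ ((m:ℂ) * (j:ℂ)^2 + s * (j:ℂ)) := summable_G1 m hm τ hτ s (z1+z2) z1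
  have hF : Summable fun j : ℤ =>
      Complex.exp (2 * Real.pi * Complex.I * ((m:ℂ) * (j:ℂ) * (z1 + z2) + s * z1)) *
        qpow τ ((m:ℂ) * (j:ℂ)^2 + s * (j:ℂ)) / (1 - e2 z1 * qpow τ (j:ℂ)) :=
    summable_div_denom τ hτ z1 _ hG
  rw [Phi1_t0, Phi1_t0, ← Summable.tsum_sub hF hG]
  apply tsum_congr
  intro j
  have hD := denom_ne_zero τ z1 hz1 j
  have hnum : Complex.exp (2 * Real.pi * Complex.I * ((m:ℂ) * (j:ℂ) * (z1 + z2) + (s+1) * z1)) *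
      qpow τ ((m:ℂ) * (j:ℂ)^2 + (s+1) * (j:ℂ)) =
      Complex.exp (2 * Real.pi * Complex.I * ((m:ℂ) * (j:ℂ) * (z1 + z2) + s * z1)) *
        qpow τ ((m:ℂ) * (j:ℂ)^2 + s * (j:ℂ)) * (e2 z1 * qpow τ (j:ℂ)) := by
    simp only [qpow, e2, ← Complex.exp_add]
    congr 1
    ring
  rw [hnum]
  field_simp
  ring

lemma Phi2_step (m : ℝ) (hm : 0 < m) (τ : ℂ) (hτ : 0 < τ.im) (z1 z2 : ℂ)
    (hz2 : ¬ InLattice τ z2) (s : ℂ) :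
    Phi2 (m:ℂ) (s+1) τ z1 z2 0 = Phi2 (m:ℂ) s τ z1 z2 0 -
      ∑' j : ℤ, Complex.exp (-(2 * Real.pi * Complex.I) * ((m:ℂ) * (j:ℂ) * (z1 + z2) + s * z2)) *
        qpow τ ((m:ℂ) * (j:ℂ)^2 + s * (j:ℂ)) := by
  have hG : Summable fun j : ℤ =>
      Complex.exp (-(2 * Real.pi * Complex.I) * ((m:ℂ) * (j:ℂ) * (z1 + z2) + s * z2)) *
        qpow τ ((m:ℂ) * (j:ℂ)^2 + s * (j:ℂ)) := summable_G2 m hm τ hτ s (z1+z2) z2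
  have hF : Summable fun j : ℤ =>
      Complex.exp (-(2 * Real.pi * Complex.I) * ((m:ℂ) * (j:ℂ) * (z1 + z2) + s * z2)) *
        qpow τ ((m:ℂ) * (j:ℂ)^2 + s * (j:ℂ)) / (1 - e2 (-z2) * qpow τ (j:ℂ)) :=
    summable_div_denom τ hτ (-z2) _ hG
  rw [Phi2_t0, Phi2_t0, ← Summable.tsum_sub hF hG]
  apply tsum_congr
  intro j
  have hD := denom_ne_zero τ (-z2) (neg_not_inLattice τ z2 hz2) j
  have hnum : Complex.exp (-(2 * Real.pi * Complex.I) * ((m:ℂ) * (j:ℂ) * (z1 + z2) + (s+1) * z2)) *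
      qpow τ ((m:ℂ) * (j:ℂ)^2 + (s+1) * (j:ℂ)) =
      Complex.exp (-(2 * Real.pi * Complex.I) * ((m:ℂ) * (j:ℂ) * (z1 + z2) + s * z2)) *
        qpow τ ((m:ℂ) * (j:ℂ)^2 + s * (j:ℂ)) * (e2 (-z2) * qpow τ (j:ℂ)) := by
    simp only [qpow, e2, ← Complex.exp_add]
    congr 1
    ring
  rw [hnum]
  field_simp
  ring

lemma theta_pos (m : ℝ) (hm : 0 < m) (τ z1 z2 s : ℂ) :
    Complex.exp (Real.pi * Complex.I * s * (z1 - z2)) * qpow τ (-(s^2) / (4*(m:ℂ))) *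
      jTheta s (m:ℂ) τ (z1+z2) =
    ∑' j : ℤ, Complex.exp (2 * Real.pi * Complex.I * ((m:ℂ) * (j:ℂ) * (z1 + z2) + s * z1)) *
      qpow τ ((m:ℂ) * (j:ℂ)^2 + s * (j:ℂ)) := by
  have hm0 : (m:ℂ) ≠ 0 := Complex.ofReal_ne_zero.mpr hm.ne'
  rw [jTheta, ← tsum_mul_left]
  apply tsum_congr
  intro j
  simp only [qpow, ← Complex.exp_add]
  congr 1
  field_simp
  ring

lemma theta_neg (m : ℝ) (hm : 0 < m) (τ z1 z2 s : ℂ) :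
    Complex.exp (Real.pi * Complex.I * s * (z1 - z2)) * qpow τ (-(s^2) / (4*(m:ℂ))) *
      jTheta (-s) (m:ℂ) τ (z1+z2) =
    ∑' j : ℤ, Complex.exp (-(2 * Real.pi * Complex.I) * ((m:ℂ) * (j:ℂ) * (z1 + z2) + s * z2)) *
      qpow τ ((m:ℂ) * (j:ℂ)^2 + s * (j:ℂ)) := by
  have hm0 : (m:ℂ) ≠ 0 := Complex.ofReal_ne_zero.mpr hm.ne'
  conv_lhs => rw [jTheta, ← (Equiv.neg ℤ).tsum_eq, ← tsum_mul_left]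
  apply tsum_congr
  intro j
  simp only [Equiv.neg_apply, Int.cast_neg, qpow, ← Complex.exp_add]
  congr 1
  field_simp
  ring

lemma Phi_step (m : ℝ) (hm : 0 < m) (τ : ℂ) (hτ : 0 < τ.im) (z1 z2 : ℂ)
    (hz1 : ¬ InLattice τ z1) (hz2 : ¬ InLattice τ z2) (s : ℂ) :
    Phi (m:ℂ) (s+1) τ z1 z2 0 = Phi (m:ℂ) s τ z1 z2 0 -
      Complex.exp (Real.pi * Complex.I * s * (z1 - z2)) * qpow τ (-(s^2) / (4*(m:ℂ))) *
        (jTheta s (m:ℂ) τ (z1+z2) - jTheta (-s) (m:ℂ) τ (z1+z2)) := by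
  rw [Phi, Phi, Phi1_step m hm τ hτ z1 z2 hz1 s, Phi2_step m hm τ hτ z1 z2 hz2 s,
    ← theta_pos m hm τ z1 z2 s, ← theta_neg m hm τ z1 z2 s]
  ring

lemma Phi_iter (m : ℝ) (hm : 0 < m) (τ : ℂ) (hτ : 0 < τ.im) (z1 z2 : ℂ)
    (hz1 : ¬ InLattice τ z1) (hz2 : ¬ InLattice τ z2) (s : ℂ) (n : ℕ) :
    Phi (m:ℂ) (s + (n:ℂ)) τ z1 z2 0 = Phi (m:ℂ) s τ z1 z2 0 -
      ∑ k ∈ Finset.range n,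
        Complex.exp (Real.pi * Complex.I * (s + (k:ℂ)) * (z1 - z2)) *
          qpow τ (-((s + (k:ℂ))^2) / (4*(m:ℂ))) *
          (jTheta (s + (k:ℂ)) (m:ℂ) τ (z1+z2) - jTheta (-(s + (k:ℂ))) (m:ℂ) τ (z1+z2)) := by
  induction n with
  | zero => simp
  | succ n ih =>
    have hcast : s + ((n+1 : ℕ):ℂ) = (s + (n:ℂ)) + 1 := by push_cast; ring
    rw [hcast, Phi_step m hm τ hτ z1 z2 hz1 hz2 (s + (n:ℂ)), ih, Finset.sum_range_succ]
    ring

lemma Phi1_shift (m : ℝ) (τ z1 z2 s : ℂ) (p N : ℕ) (hN : (m:ℂ) * (p:ℂ) = (N:ℂ)) :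
    Phi1 (m:ℂ) s τ z1 (z2 + (p:ℂ)*τ) 0 =
      Complex.exp (-(2 * Real.pi * Complex.I) * (N:ℂ) * z1) *
        Phi1 (m:ℂ) (s + (N:ℂ)) τ z1 z2 0 := by
  rw [Phi1_t0, Phi1_t0, ← tsum_mul_left]
  apply tsum_congr
  intro j
  rw [← mul_div_assoc]
  congr 1
  simp only [qpow, ← Complex.exp_add]
  congr 1
  push_cast
  linear_combination (2 * (Real.pi:ℂ) * Complex.I * τ * (j:ℂ)) * hN

lemma Phi2_shift (m : ℝ) (τ z1 z2 s : ℂ) (p N : ℕ) (hN : (m:ℂ) * (p:ℂ) = (N:ℂ)) :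
    Phi2 (m:ℂ) s τ z1 (z2 + (p:ℂ)*τ) 0 =
      Complex.exp (-(2 * Real.pi * Complex.I) * (N:ℂ) * z1) *
        Phi2 (m:ℂ) (s + (N:ℂ)) τ z1 z2 0 := by
  rw [Phi2_t0, Phi2_t0, ← tsum_mul_left]
  conv_lhs => rw [← (Equiv.addRight (p:ℤ)).tsum_eq]
  apply tsum_congr
  intro j
  simp only [Equiv.coe_addRight]
  have hden : 1 - e2 (-(z2 + (p:ℂ)*τ)) * qpow τ ((j + (p:ℤ) : ℤ):ℂ) =
      1 - e2 (-z2) * qpow τ (j:ℂ) := by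
    congr 1
    simp only [e2, qpow, ← Complex.exp_add]
    congr 1
    push_cast
    ring
  rw [hden, ← mul_div_assoc]
  congr 1
  simp only [qpow, ← Complex.exp_add]
  congr 1
  push_cast
  linear_combination (2 * (Real.pi:ℂ) * Complex.I * (τ*(j:ℂ) - z1 - z2)) * hN

theorem statement8 (m s : ℝ) (hm : ∃ n : ℕ, 0 < n ∧ m = n / 2)
    (hs : ∃ a : ℤ, s = a / 2) (p N : ℕ) (hN : m * (p : ℝ) = (N : ℝ))
    (τ : ℂ) (hτ : 0 < τ.im) (z1 z2 : ℂ)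
    (hz1 : ¬ InLattice τ z1) (hz2 : ¬ InLattice τ z2) :
    Phi (m : ℂ) (s : ℂ) τ z1 (z2 + (p : ℂ) * τ) 0 =
      Complex.exp (-(2 * Real.pi * Complex.I) * (m : ℂ) * (p : ℂ) * z1) *
          Phi (m : ℂ) (s : ℂ) τ z1 z2 0 -
        Complex.exp (-(2 * Real.pi * Complex.I) * (m : ℂ) * (p : ℂ) * z1) *
          ∑ k ∈ Finset.range N,
            Complex.exp (Real.pi * Complex.I * ((s : ℂ) + (k : ℂ)) * (z1 - z2)) *
              qpow τ (-(((s : ℂ) + (k : ℂ)) ^ 2) / (4 * (m : ℂ))) *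
              (jTheta ((s : ℂ) + (k : ℂ)) (m : ℂ) τ (z1 + z2) -
                jTheta (-((s : ℂ) + (k : ℂ))) (m : ℂ) τ (z1 + z2)) := by

  obtain ⟨n0, hn0, hmeq⟩ := hm
  have hm0 : 0 < m := by rw [hmeq]; positivity
  have hNC : (m:ℂ) * (p:ℂ) = (N:ℂ) := by
    have := congrArg (Complex.ofReal) hN
    push_cast at this
    exact this
  have hpre : Complex.exp (-(2 * Real.pi * Complex.I) * (m:ℂ) * (p:ℂ) * z1) =
      Complex.exp (-(2 * Real.pi * Complex.I) * (N:ℂ) * z1) := by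
    congr 1
    linear_combination (-(2 * (Real.pi:ℂ) * Complex.I) * z1) * hNC
  have hshift : Phi (m:ℂ) (s:ℂ) τ z1 (z2 + (p:ℂ)*τ) 0 =
      Complex.exp (-(2 * Real.pi * Complex.I) * (N:ℂ) * z1) *
        Phi (m:ℂ) ((s:ℂ) + (N:ℂ)) τ z1 z2 0 := by
    rw [Phi, Phi, Phi1_shift m τ z1 z2 (s:ℂ) p N hNC, Phi2_shift m τ z1 z2 (s:ℂ) p N hNC]
    ring
  rw [hpre, hshift, Phi_iter m hm0 τ hτ z1 z2 hz1 hz2 (s:ℂ) N, mul_sub]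

end Wakimoto
end
end

section
/- Let m be a positive half-odd integer (2m an odd positive integer). Then for all τ in the upper half-plane and z1, z2 ∈ ℂ (with all denominators nonzero): Φ^{[m,0]}(τ, z1, z2, 0) = e^{2πimz1} Φ^{[m,1/2]}(τ, z1, z2+τ, 0) + Σ_{k=1}^{m−1/2} e^{πik(z1−z2)} q^{−k²/(4m)} [θ_{k,m} − θ_{−k,m}](τ, z1+z2), where k runs over the integers 1, …, m−1/2. -/
open Complex

noncomputable section

namespace Wakimoto

open Filter in
lemma two_pi_I_ne : (2 * (Real.pi:ℂ) * Complex.I) ≠ 0 := by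
  simp [Real.pi_ne_zero, I_ne_zero]

lemma aux_summable1 {τ : ℂ} (hτ : 0 < τ.im) {m : ℝ} (hm : 0 < m) (β : ℂ) :
    Summable fun j : ℤ => Complex.exp (β * j + 2 * Real.pi * I * τ * ((m:ℂ) * (j:ℂ)^2)) := by
  have h : ∀ j : ℤ, Complex.exp (β * j + 2 * Real.pi * I * τ * ((m:ℂ) * (j:ℂ)^2))
      = jacobiTheta₂_term j (β / (2 * Real.pi * I)) (2 * (m:ℂ) * τ) := by
    intro j
    rw [jacobiTheta₂_term]
    congr 1
    field_simp [two_pi_I_ne]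
  rw [show (fun j : ℤ => Complex.exp (β * j + 2 * Real.pi * I * τ * ((m:ℂ) * (j:ℂ)^2)))
      = fun j : ℤ => jacobiTheta₂_term j (β / (2 * Real.pi * I)) (2 * (m:ℂ) * τ) from funext h]
  refine (summable_jacobiTheta₂_term_iff _ _).mpr ?_
  have : (2 * (m:ℂ) * τ).im = 2 * m * τ.im := by simp [Complex.mul_im]
  rw [this]; positivity

lemma denom_ne {τ : ℂ} {z : ℂ} (hz : ¬ InLattice τ z) (j : ℤ) :
    1 - e2 z * qpow τ (j:ℂ) ≠ 0 := by
  intro h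
  apply hz
  have h1 : e2 z * qpow τ (j:ℂ) = 1 := by
    have := sub_eq_zero.mp h; exact this.symm
  rw [e2, qpow, ← Complex.exp_add, Complex.exp_eq_one_iff] at h1
  obtain ⟨k, hk⟩ := h1
  refine ⟨k, -j, ?_⟩
  apply mul_left_cancel₀ two_pi_I_ne
  push_cast
  linear_combination hk

lemma norm_qpow_int (τ : ℂ) (j : ℤ) :
    ‖qpow τ (j:ℂ)‖ = Real.exp (-(2 * Real.pi * τ.im * j)) := by
  rw [qpow, Complex.norm_exp]
  congr 1
  simp [Complex.mul_re, Complex.mul_im]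

open Filter in
lemma denom_event {τ : ℂ} (hτ : 0 < τ.im) (z : ℂ) :
    ∀ᶠ j : ℤ in Filter.cofinite, (1:ℝ)/2 ≤ ‖1 - e2 z * qpow τ (j:ℂ)‖ := by
  set t : ℝ := 2 * Real.pi * τ.im with ht
  have htpos : 0 < t := by positivity
  set a : ℝ := ‖e2 z‖ with ha
  have hapos : 0 < a := by
    rw [ha, e2, Complex.norm_exp]; exact Real.exp_pos _
  rw [Filter.eventually_cofinite]
  have hsub : {j : ℤ | ¬ (1:ℝ)/2 ≤ ‖1 - e2 z * qpow τ (j:ℂ)‖} ⊆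
      Set.Icc ⌈(-Real.log (3/(2*a)))/t⌉ ⌊(-Real.log (1/(2*a)))/t⌋ := by
    intro j hj
    simp only [Set.mem_setOf_eq, not_le] at hj
    have hnorm : ‖e2 z * qpow τ (j:ℂ)‖ = a * Real.exp (-(t*j)) := by
      rw [norm_mul, norm_qpow_int]
    have h1 : (1:ℝ)/2 < a * Real.exp (-(t*j)) := by
      have := norm_sub_norm_le (1 : ℂ) (e2 z * qpow τ (j:ℂ))
      rw [hnorm] at this
      simp only [norm_one] at this
      linarith
    have h2 : a * Real.exp (-(t*j)) < 3/2 := by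
      have := norm_le_norm_add_norm_sub' (e2 z * qpow τ (j:ℂ)) (1:ℂ)
      rw [hnorm] at this
      simp only [norm_one] at this
      linarith [norm_nonneg (1 - e2 z * qpow τ (j:ℂ)), hj,
        (norm_sub_rev (e2 z * qpow τ (j:ℂ)) 1)]
    constructor
    · rw [Int.ceil_le]
      have hexp : Real.exp (-(t*j)) < 3/(2*a) := by
        rw [lt_div_iff₀ (by positivity : (0:ℝ) < 2*a)]
        nlinarith
      have hlog : -(t*(j:ℝ)) < Real.log (3/(2*a)) := by
        rw [Real.lt_log_iff_exp_lt (by positivity)]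
        exact hexp
      rw [div_le_iff₀ htpos]
      linarith
    · rw [Int.le_floor]
      have hexp : 1/(2*a) < Real.exp (-(t*j)) := by
        rw [div_lt_iff₀ (by positivity)]
        nlinarith
      have hlog : Real.log (1/(2*a)) < -(t*(j:ℝ)) := by
        rw [Real.log_lt_iff_lt_exp (by positivity)]
        exact hexp
      rw [le_div_iff₀ htpos]
      linarith
  exact (Set.finite_Icc _ _).subset hsub

lemma aux_summable2 {τ : ℂ} (hτ : 0 < τ.im) {m : ℝ} (hm : 0 < m) (β z : ℂ) :
    Summable fun j : ℤ =>
      Complex.exp (β * j + 2 * Real.pi * I * τ * ((m:ℂ) * (j:ℂ)^2)) /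
        (1 - e2 z * qpow τ (j:ℂ)) := by
  apply Summable.of_norm_bounded_eventually
    (g := fun j : ℤ => 2 * ‖Complex.exp (β * j + 2 * Real.pi * I * τ * ((m:ℂ) * (j:ℂ)^2))‖)
    ((summable_norm_iff.mpr (aux_summable1 hτ hm β)).mul_left 2)
  filter_upwards [denom_event hτ z] with j hj
  rw [norm_div]
  rw [div_le_iff₀ (by linarith)]
  nlinarith [norm_nonneg (Complex.exp (β * j + 2 * Real.pi * I * τ * ((m:ℂ) * (j:ℂ)^2)))]

/-- `E`-term: `exp(2πi m w j + 2πi τ m j²)`. -/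
def Eterm (m : ℝ) (τ w : ℂ) (j : ℤ) : ℂ :=
  Complex.exp (2 * Real.pi * I * ((m:ℂ) * w) * j + 2 * Real.pi * I * τ * ((m:ℂ) * (j:ℂ)^2))

lemma Eterm_mul_pow (m : ℝ) (τ w z : ℂ) (k : ℕ) (j : ℤ) :
    Eterm m τ w j * (e2 z * qpow τ (j:ℂ))^k
      = Complex.exp ((k:ℂ) * (2 * Real.pi * I * z)) *
        Complex.exp ((2 * Real.pi * I * ((m:ℂ) * w) + (k:ℂ) * (2 * Real.pi * I * τ)) * j
          + 2 * Real.pi * I * τ * ((m:ℂ) * (j:ℂ)^2)) := by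
  rw [Eterm, e2, qpow, ← Complex.exp_add, ← Complex.exp_nat_mul, ← Complex.exp_add,
    ← Complex.exp_add]
  congr 1
  ring

lemma summable_Eterm_pow {τ : ℂ} (hτ : 0 < τ.im) {m : ℝ} (hm : 0 < m) (w z : ℂ) (k : ℕ) :
    Summable fun j : ℤ => Eterm m τ w j * (e2 z * qpow τ (j:ℂ))^k := by
  have := (aux_summable1 hτ hm
      (2 * Real.pi * I * ((m:ℂ) * w) + (k:ℂ) * (2 * Real.pi * I * τ))).mul_left
    (Complex.exp ((k:ℂ) * (2 * Real.pi * I * z)))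
  exact this.congr fun j => (Eterm_mul_pow m τ w z k j).symm

lemma summable_Eterm_pow_div {τ : ℂ} (hτ : 0 < τ.im) {m : ℝ} (hm : 0 < m) (w z : ℂ) (k : ℕ) :
    Summable fun j : ℤ =>
      Eterm m τ w j * (e2 z * qpow τ (j:ℂ))^k / (1 - e2 z * qpow τ (j:ℂ)) := by
  have := ((aux_summable2 hτ hm
      (2 * Real.pi * I * ((m:ℂ) * w) + (k:ℂ) * (2 * Real.pi * I * τ)) z).mul_left
    (Complex.exp ((k:ℂ) * (2 * Real.pi * I * z))))
  apply this.congr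
  intro j
  rw [mul_div_assoc', Eterm_mul_pow]

lemma geom_decomp (E X : ℂ) (hX : 1 - X ≠ 0) (n : ℕ) :
    E / (1 - X) = E * X^(n+1) / (1 - X) + ∑ k ∈ Finset.range (n+1), E * X^k := by
  have h := geom_sum_mul X (n+1)
  rw [← Finset.mul_sum]
  field_simp
  linear_combination E * h


theorem statement15 (m : ℝ) (n : ℕ) (hm : m = (2 * n + 1) / 2)
    (τ : ℂ) (hτ : 0 < τ.im) (z1 z2 : ℂ)
    (hz1 : ¬ InLattice τ z1) (hz2 : ¬ InLattice τ z2) :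
    Phi (m : ℂ) 0 τ z1 z2 0 =
      e2 ((m : ℂ) * z1) * Phi (m : ℂ) (1 / 2) τ z1 (z2 + τ) 0 +
        ∑ k ∈ Finset.Icc 1 n,
          Complex.exp (Real.pi * Complex.I * (k : ℂ) * (z1 - z2)) *
            qpow τ (-((k : ℂ) ^ 2) / (4 * (m : ℂ))) *
            (jTheta (k : ℂ) (m : ℂ) τ (z1 + z2) -
              jTheta (-(k : ℂ)) (m : ℂ) τ (z1 + z2)) := by
  have hm' : (0:ℝ) < m := by rw [hm]; positivity
  have hmc : (m:ℂ) = (2*(n:ℂ)+1)/2 := by rw [hm]; push_cast; ring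
  have hm0 : (m:ℂ) ≠ 0 := Complex.ofReal_ne_zero.mpr hm'.ne'
  have hz2' : ¬ InLattice τ (-z2) := by
    rintro ⟨a, b, h⟩
    exact hz2 ⟨-a, -b, by push_cast; linear_combination -h⟩
  have hz2'' : ¬ InLattice τ (-(z2 + τ)) := by
    rintro ⟨a, b, h⟩
    exact hz2 ⟨-a, -b-1, by push_cast; linear_combination -h⟩
  -- canonical forms
  have hPhi1a : Phi1 (m:ℂ) 0 τ z1 z2 0
      = ∑' j : ℤ, Eterm m τ (z1+z2) j / (1 - e2 z1 * qpow τ (j:ℂ)) := by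
    rw [Phi1, mul_zero, Complex.exp_zero, one_mul]
    refine tsum_congr fun j => ?_
    congr 1
    rw [Eterm, qpow, ← Complex.exp_add]
    congr 1
    ring
  have hPhi2a : Phi2 (m:ℂ) 0 τ z1 z2 0
      = ∑' j : ℤ, Eterm m τ (-(z1+z2)) j / (1 - e2 (-z2) * qpow τ (j:ℂ)) := by
    rw [Phi2, mul_zero, Complex.exp_zero, one_mul]
    refine tsum_congr fun j => ?_
    congr 1
    rw [Eterm, qpow, ← Complex.exp_add]
    congr 1
    ring
  have hPhi1b : e2 ((m:ℂ) * z1) * Phi1 (m:ℂ) (1/2) τ z1 (z2+τ) 0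
      = ∑' j : ℤ, Eterm m τ (z1+z2) j * (e2 z1 * qpow τ (j:ℂ))^(n+1)
          / (1 - e2 z1 * qpow τ (j:ℂ)) := by
    rw [Phi1, mul_zero, Complex.exp_zero, one_mul, ← tsum_mul_left]
    refine tsum_congr fun j => ?_
    rw [mul_div_assoc']
    congr 1
    simp only [Eterm, e2, qpow, ← Complex.exp_add, ← Complex.exp_nat_mul]
    congr 1
    rw [hmc]
    push_cast
    ring
  have hPhi2b : e2 ((m:ℂ) * z1) * Phi2 (m:ℂ) (1/2) τ z1 (z2+τ) 0
      = ∑' j : ℤ, Eterm m τ (-(z1+z2)) j * (e2 (-z2) * qpow τ (j:ℂ))^(n+1)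
          / (1 - e2 (-z2) * qpow τ (j:ℂ)) := by
    rw [Phi2, mul_zero, Complex.exp_zero, one_mul, ← tsum_mul_left,
      ← (Equiv.addRight (1:ℤ)).tsum_eq]
    refine tsum_congr fun j => ?_
    simp only [Equiv.coe_addRight]
    push_cast
    have hden : e2 (-(z2+τ)) * qpow τ ((j:ℂ)+1) = e2 (-z2) * qpow τ (j:ℂ) := by
      rw [e2, e2, qpow, qpow, ← Complex.exp_add, ← Complex.exp_add]
      congr 1
      ring
    rw [hden, mul_div_assoc']
    congr 1
    simp only [Eterm, e2, qpow, ← Complex.exp_add, ← Complex.exp_nat_mul]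
    congr 1
    rw [hmc]
    push_cast
    ring
  -- geometric decompositions
  have hgeom1 : (∑' j : ℤ, Eterm m τ (z1+z2) j / (1 - e2 z1 * qpow τ (j:ℂ)))
      = (∑' j : ℤ, Eterm m τ (z1+z2) j * (e2 z1 * qpow τ (j:ℂ))^(n+1)
          / (1 - e2 z1 * qpow τ (j:ℂ)))
        + ∑ k ∈ Finset.range (n+1), ∑' j : ℤ, Eterm m τ (z1+z2) j * (e2 z1 * qpow τ (j:ℂ))^k := by
    rw [← Summable.tsum_finsetSum (fun k _ => summable_Eterm_pow hτ hm' (z1+z2) z1 k),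
      ← Summable.tsum_add (summable_Eterm_pow_div hτ hm' (z1+z2) z1 (n+1))
        (summable_sum (fun k _ => summable_Eterm_pow hτ hm' (z1+z2) z1 k))]
    exact tsum_congr fun j => geom_decomp _ _ (denom_ne hz1 j) n
  have hgeom2 : (∑' j : ℤ, Eterm m τ (-(z1+z2)) j / (1 - e2 (-z2) * qpow τ (j:ℂ)))
      = (∑' j : ℤ, Eterm m τ (-(z1+z2)) j * (e2 (-z2) * qpow τ (j:ℂ))^(n+1)
          / (1 - e2 (-z2) * qpow τ (j:ℂ)))
        + ∑ k ∈ Finset.range (n+1), ∑' j : ℤ, Eterm m τ (-(z1+z2)) j * (e2 (-z2) * qpow τ (j:ℂ))^k := by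
    rw [← Summable.tsum_finsetSum (fun k _ => summable_Eterm_pow hτ hm' (-(z1+z2)) (-z2) k),
      ← Summable.tsum_add (summable_Eterm_pow_div hτ hm' (-(z1+z2)) (-z2) (n+1))
        (summable_sum (fun k _ => summable_Eterm_pow hτ hm' (-(z1+z2)) (-z2) k))]
    exact tsum_congr fun j => geom_decomp _ _ (denom_ne hz2' j) n
  -- k = 0 terms agree
  have hT0 : (∑' j : ℤ, Eterm m τ (z1+z2) j * (e2 z1 * qpow τ (j:ℂ))^0)
      = ∑' j : ℤ, Eterm m τ (-(z1+z2)) j * (e2 (-z2) * qpow τ (j:ℂ))^0 := by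
    simp only [pow_zero, mul_one]
    rw [← (Equiv.neg ℤ).tsum_eq (fun j : ℤ => Eterm m τ (-(z1+z2)) j)]
    refine tsum_congr fun j => ?_
    simp only [Equiv.neg_apply, Eterm]
    congr 1
    push_cast
    ring
  -- theta identifications
  have hθ1 : ∀ k : ℕ,
      Complex.exp (Real.pi * Complex.I * (k : ℂ) * (z1 - z2)) *
          qpow τ (-((k : ℂ) ^ 2) / (4 * (m : ℂ))) * jTheta (k : ℂ) (m:ℂ) τ (z1+z2)
        = ∑' j : ℤ, Eterm m τ (z1+z2) j * (e2 z1 * qpow τ (j:ℂ))^k := by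
    intro k
    rw [jTheta, ← tsum_mul_left]
    refine tsum_congr fun j => ?_
    simp only [Eterm, e2, qpow, ← Complex.exp_nat_mul, ← Complex.exp_add]
    congr 1
    field_simp
    ring
  have hθ2 : ∀ k : ℕ,
      Complex.exp (Real.pi * Complex.I * (k : ℂ) * (z1 - z2)) *
          qpow τ (-((k : ℂ) ^ 2) / (4 * (m : ℂ))) * jTheta (-(k : ℂ)) (m:ℂ) τ (z1+z2)
        = ∑' j : ℤ, Eterm m τ (-(z1+z2)) j * (e2 (-z2) * qpow τ (j:ℂ))^k := by
    intro k
    rw [jTheta, ← tsum_mul_left,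
      ← (Equiv.neg ℤ).tsum_eq (fun j : ℤ =>
        Eterm m τ (-(z1+z2)) j * (e2 (-z2) * qpow τ (j:ℂ))^k)]
    refine tsum_congr fun j => ?_
    simp only [Equiv.neg_apply, Eterm, e2, qpow, ← Complex.exp_nat_mul, ← Complex.exp_add]
    congr 1
    push_cast
    field_simp
    ring
  -- assemble
  have hsplit : Finset.range (n+1) = insert 0 (Finset.Icc 1 n) := by
    ext x
    simp only [Finset.mem_range, Finset.mem_insert, Finset.mem_Icc]
    omega
  have hR : (∑ k ∈ Finset.Icc 1 n,
        Complex.exp (Real.pi * Complex.I * (k : ℂ) * (z1 - z2)) *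
          qpow τ (-((k : ℂ) ^ 2) / (4 * (m : ℂ))) *
          (jTheta (k : ℂ) (m:ℂ) τ (z1 + z2) - jTheta (-(k : ℂ)) (m:ℂ) τ (z1 + z2)))
      = (∑ k ∈ Finset.Icc 1 n, ∑' j : ℤ, Eterm m τ (z1+z2) j * (e2 z1 * qpow τ (j:ℂ))^k)
        - ∑ k ∈ Finset.Icc 1 n, ∑' j : ℤ, Eterm m τ (-(z1+z2)) j * (e2 (-z2) * qpow τ (j:ℂ))^k := by
    rw [← Finset.sum_sub_distrib]
    refine Finset.sum_congr rfl fun k _ => ?_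
    rw [mul_sub, hθ1 k, hθ2 k]
  rw [Phi, Phi, mul_sub, hPhi1a, hPhi2a, hPhi1b, hPhi2b, hgeom1, hgeom2, hR,
    hsplit, Finset.sum_insert (by simp), Finset.sum_insert (by simp), hT0]
  ring


end Wakimoto
end
end
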